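/- Every Joyal–Kock graph G is canonically the colimit, in the category of graphs and etale morphisms, of the diagram of its elementary subgraphs, indexed by the category of elements el(G) = elGr ↓ G, where elGr is the full subcategory of elementary graphs (connected graphs without inner edges). -/

import Mathlib

/-- A Joyal–Kock graph: a diagram of finite sets `A ←s– H –p→ V` with `s`
injective and a fixpoint-free involution `i` on the set of arcs `A`. -/
structure JKGraph where
  A : Type
  H : Type
  V : Type
  fintA : Fintype A
  fintH : Fintype H
  fintV : Fintype V
  decA : DecidableEq A
  decH : DecidableEq H
  s : H → A
  p : H → V
  i : A → A
  s_inj : Function.Injective s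
  i_invol : ∀ a, i (i a) = a
  i_nofix : ∀ a, i a ≠ a

attribute [instance] JKGraph.fintA JKGraph.fintH JKGraph.fintV JKGraph.decA JKGraph.decH

/-- An etale morphism of JK graphs: a levelwise map commuting with `s`, `p`
and the involutions, such that the square on `H` and `V` is a pullback (each
vertex maps to a vertex of the same valence). -/
structure Etale (G G' : JKGraph) where
  fA : G.A → G'.A
  fH : G.H → G'.H
  fV : G.V → G'.V
  comm_s : ∀ h, fA (G.s h) = G'.s (fH h)
  comm_p : ∀ h, fV (G.p h) = G'.p (fH h)
  comm_i : ∀ a, fA (G.i a) = G'.i (fA a)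
  pullback : ∀ (h' : G'.H) (v : G.V), G'.p h' = fV v → ∃! h : G.H, G.p h = v ∧ fH h = h'

/-- `IsEComp e1 e2 e` expresses that `e` is the (levelwise) composite of the
etale morphisms `e1` followed by `e2`. -/
def IsEComp {G G' G'' : JKGraph} (e1 : Etale G G') (e2 : Etale G' G'') (e : Etale G G'') : Prop :=
  (∀ a, e.fA a = e2.fA (e1.fA a)) ∧ (∀ h, e.fH h = e2.fH (e1.fH h)) ∧
  (∀ v, e.fV v = e2.fV (e1.fV v))

/-- The ports of a graph: the arcs not in the image of `s`. -/
def JKGraph.ports (G : JKGraph) : Set G.A := {a | a ∉ Set.range G.s}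

/-- An edge (i-orbit) is isolated if neither of its arcs lies in the image of
`s`; `NoIsolated` says the graph has no isolated edges. -/
def NoIsolated (G : JKGraph) : Prop :=
  ∀ a : G.A, a ∈ Set.range G.s ∨ G.i a ∈ Set.range G.s

/-- A reduced cover: an etale morphism which is surjective on arcs (hence on
edges) and bijective on vertices. -/
def IsReducedCover {R X : JKGraph} (e : Etale R X) : Prop :=
  Function.Bijective e.fV ∧ Function.Surjective e.fA

/-- A JK graph is connected if it is nonempty and admits no nontrivial
splitting into a clopen subsystem: any nonempty collection of arcs and
vertices, closed under the involution and such that a flag's arc belongs iff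
its vertex belongs, must be everything. -/
def JKIsConnected (G : JKGraph) : Prop :=
  (Nonempty G.A ∨ Nonempty G.V) ∧
  ∀ (SA : Set G.A) (SV : Set G.V),
    (∀ a ∈ SA, G.i a ∈ SA) →
    (∀ h : G.H, G.s h ∈ SA ↔ G.p h ∈ SV) →
    (SA.Nonempty ∨ SV.Nonempty) → (SA = Set.univ ∧ SV = Set.univ)

/-- An elementary graph: connected and without inner edges. -/
def JKIsElementary (E : JKGraph) : Prop :=
  JKIsConnected E ∧ ∀ h h' : E.H, E.i (E.s h) ≠ E.s h'

noncomputable section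

def I0 : JKGraph where
  A := Bool
  H := Empty
  V := Empty
  fintA := inferInstance
  fintH := inferInstance
  fintV := inferInstance
  decA := inferInstance
  decH := inferInstance
  s := Empty.elim
  p := Empty.elim
  i := fun b => !b
  s_inj := by intro a _ _; exact a.elim
  i_invol := by decide
  i_nofix := by decide

theorem I0_elem : JKIsElementary I0 := by
  refine ⟨⟨Or.inl ⟨true⟩, ?_⟩, fun h => h.elim⟩
  intro SA SV hi hc hne
  constructor
  · ext b
    simp only [Set.mem_univ, iff_true]
    rcases hne with ⟨a, ha⟩ | ⟨v, _⟩
    · have h2 : (!a) ∈ SA := hi a ha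
      cases a <;> cases b <;> simp_all <;> exact h2
    · exact v.elim
  · ext v; exact v.elim

def unitMap (G : JKGraph) (a : G.A) : Etale I0 G where
  fA := fun b => bif b then a else G.i a
  fH := Empty.elim
  fV := Empty.elim
  comm_s := fun h => h.elim
  comm_p := fun h => h.elim
  comm_i := by
    intro b; cases b
    · exact (G.i_invol a).symm
    · rfl
  pullback := fun _ v _ => v.elim

def corolla (G : JKGraph) (v : G.V) : JKGraph :=
  letI : DecidablePred (fun h : G.H => G.p h = v) := fun _ => Classical.dec _
  { A := {h : G.H // G.p h = v} ⊕ {h : G.H // G.p h = v}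
    H := {h : G.H // G.p h = v}
    V := Unit
    fintA := inferInstance
    fintH := inferInstance
    fintV := inferInstance
    decA := inferInstance
    decH := inferInstance
    s := Sum.inl
    p := fun _ => ()
    i := Sum.swap
    s_inj := Sum.inl_injective
    i_invol := fun a => Sum.swap_swap a
    i_nofix := fun a => by cases a <;> simp }

theorem corolla_elem (G : JKGraph) (v : G.V) : JKIsElementary (corolla G v) := by
  constructor
  · refine ⟨Or.inr ⟨()⟩, ?_⟩
    intro SA SV hi hc hne
    by_cases hv : () ∈ SV
    · constructor
      · ext a
        simp only [Set.mem_univ, iff_true]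
        cases a with
        | inl x => exact (hc x).2 hv
        | inr x => exact hi _ ((hc x).2 hv)
      · ext v'
        simp only [Set.mem_univ, iff_true]
        cases v'; exact hv
    · exfalso
      have hSA : ∀ a, a ∉ SA := by
        intro a
        cases a with
        | inl x => intro h; exact hv ((hc x).1 h)
        | inr x => intro h; exact hv ((hc x).1 (hi _ h))
      have hSV : ∀ w, w ∉ SV := by intro w; cases w; exact hv
      rcases hne with ⟨a, ha⟩ | ⟨w, hw⟩
      · exact hSA a ha
      · exact hSV w hw
  · intro h h' heq
    have : (Sum.inr h : {x : G.H // G.p x = v} ⊕ {x : G.H // G.p x = v}) = Sum.inl h' := heq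
    cases this

def corollaMap (G : JKGraph) (v : G.V) : Etale (corolla G v) G where
  fA := Sum.elim (fun x => G.s x.1) (fun x => G.i (G.s x.1))
  fH := Subtype.val
  fV := fun _ => v
  comm_s := fun _ => rfl
  comm_p := fun h => h.2.symm
  comm_i := by
    intro a
    cases a with
    | inl x => rfl
    | inr x => exact (G.i_invol _).symm
  pullback := by
    intro h' v0 hp
    refine ⟨⟨h', hp⟩, ⟨rfl, rfl⟩, ?_⟩
    rintro y ⟨-, hy⟩
    exact Subtype.ext hy

theorem unit_comp (G E : JKGraph) (m : Etale E G) (a0 : E.A) :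
    ∃ e : Etale I0 E, IsEComp e m (unitMap G (m.fA a0)) ∧ e.fA true = a0 := by
  refine ⟨⟨fun b => bif b then a0 else E.i a0, Empty.elim, Empty.elim,
    fun h => h.elim, fun h => h.elim, ?_, fun _ v _ => v.elim⟩,
    ⟨?_, fun h => h.elim, fun v => v.elim⟩, rfl⟩
  · intro b; cases b
    · exact (E.i_invol a0).symm
    · rfl
  · intro b; cases b
    · exact (m.comm_i a0).symm
    · rfl

theorem corolla_comp (G E : JKGraph) (m : Etale E G) (v0 : E.V) :
    ∃ e : Etale (corolla G (m.fV v0)) E,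
      IsEComp e m (corollaMap G (m.fV v0)) ∧ e.fV () = v0 ∧
      ∀ (x : (corolla G (m.fV v0)).H) (h0 : E.H), E.p h0 = v0 →
        m.fH h0 = (corollaMap G (m.fV v0)).fH x → e.fH x = h0 := by
  classical
  have hsel : ∀ x : (corolla G (m.fV v0)).H, ∃! h : E.H, E.p h = v0 ∧ m.fH h = x.1 :=
    fun x => m.pullback x.1 v0 x.2
  choose φ hp1 hp2 using fun x => (hsel x).exists
  refine ⟨⟨Sum.elim (fun x => E.s (φ x)) (fun x => E.i (E.s (φ x))), φ, fun _ => v0,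
    fun _ => rfl, fun h => (hp1 h).symm, ?_, ?_⟩, ⟨?_, fun x => (hp2 x).symm, fun _ => rfl⟩,
    rfl, ?_⟩
  · intro a
    cases a with
    | inl x => rfl
    | inr x => exact (E.i_invol _).symm
  · intro h0 u hpe
    have hx : G.p (m.fH h0) = m.fV v0 := by rw [← m.comm_p, hpe]
    refine ⟨⟨m.fH h0, hx⟩, ⟨rfl, ?_⟩, ?_⟩
    · exact (hsel ⟨m.fH h0, hx⟩).unique ⟨hp1 _, hp2 _⟩ ⟨hpe, rfl⟩
    · rintro y ⟨-, hy⟩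
      exact Subtype.ext (by rw [← hp2 y, hy])
  · intro a
    cases a with
    | inl x =>
      show G.s x.1 = m.fA (E.s (φ x))
      rw [m.comm_s]; exact congrArg G.s (hp2 x).symm
    | inr x =>
      show G.i (G.s x.1) = m.fA (E.i (E.s (φ x)))
      rw [m.comm_i, m.comm_s]; exact congrArg (fun y => G.i (G.s y)) (hp2 x).symm
  · intro x h0 h1 h2
    exact (hsel x).unique ⟨hp1 x, hp2 x⟩ ⟨h1, h2⟩

theorem Etale.ext' {G G' : JKGraph} {e e' : Etale G G'}
    (hA : ∀ a, e.fA a = e'.fA a) (hH : ∀ h, e.fH h = e'.fH h)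
    (hV : ∀ v, e.fV v = e'.fV v) : e = e' := by
  obtain ⟨fA, fH, fV, _, _, _, _⟩ := e
  obtain ⟨fA', fH', fV', _, _, _, _⟩ := e'
  obtain rfl : fA = fA' := funext hA
  obtain rfl : fH = fH' := funext hH
  obtain rfl : fV = fV' := funext hV
  rfl

end

/-- Every JK graph `G` is canonically the colimit of its
elementary subgraphs, indexed by the category of elements `el(G) = elGr ↓ G`:
any cocone under this diagram (a compatible family of etale morphisms to `K`
indexed by the etale morphisms from elementary graphs to `G`) factors uniquely
through `G`. -/
theorem jk_graph_colimit_of_elements (G K : JKGraph)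
    (c : ∀ (E : JKGraph), Etale E G → JKIsElementary E → Etale E K)
    (hnat : ∀ (E E' : JKGraph) (hE : JKIsElementary E) (hE' : JKIsElementary E')
      (m : Etale E G) (m' : Etale E' G) (e : Etale E E'),
      IsEComp e m' m → IsEComp e (c E' m' hE') (c E m hE)) :
    ∃! u : Etale G K, ∀ (E : JKGraph) (m : Etale E G) (hE : JKIsElementary E),
      IsEComp m u (c E m hE) := by
  classical
  let uA : G.A → K.A := fun a => (c I0 (unitMap G a) I0_elem).fA true
  let uV : G.V → K.V := fun v => (c (corolla G v) (corollaMap G v) (corolla_elem G v)).fV ()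
  let uH : G.H → K.H := fun h =>
    (c (corolla G (G.p h)) (corollaMap G (G.p h)) (corolla_elem G (G.p h))).fH ⟨h, rfl⟩
  have uH_eq : ∀ (v : G.V) (h : G.H) (hh : G.p h = v),
      uH h = (c (corolla G v) (corollaMap G v) (corolla_elem G v)).fH ⟨h, hh⟩ := by
    intro v h hh; subst hh; rfl
  have keyA : ∀ (E : JKGraph) (hE : JKIsElementary E) (m : Etale E G) (a0 : E.A),
      uA (m.fA a0) = (c E m hE).fA a0 := by
    intro E hE m a0
    obtain ⟨e, hcomp, hfa⟩ := unit_comp G E m a0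
    have hn := hnat I0 E I0_elem hE (unitMap G (m.fA a0)) m e hcomp
    calc uA (m.fA a0) = (c I0 (unitMap G (m.fA a0)) I0_elem).fA true := rfl
      _ = (c E m hE).fA (e.fA true) := hn.1 true
      _ = (c E m hE).fA a0 := by rw [hfa]
  have keyV : ∀ (E : JKGraph) (hE : JKIsElementary E) (m : Etale E G) (v0 : E.V),
      uV (m.fV v0) = (c E m hE).fV v0 := by
    intro E hE m v0
    obtain ⟨e, hcomp, hfv, -⟩ := corolla_comp G E m v0
    have hn := hnat (corolla G (m.fV v0)) E (corolla_elem G (m.fV v0)) hE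
      (corollaMap G (m.fV v0)) m e hcomp
    calc uV (m.fV v0)
        = (c (corolla G (m.fV v0)) (corollaMap G (m.fV v0)) (corolla_elem G (m.fV v0))).fV ()
          := rfl
      _ = (c E m hE).fV (e.fV ()) := hn.2.2 ()
      _ = (c E m hE).fV v0 := by rw [hfv]
  have keyH : ∀ (E : JKGraph) (hE : JKIsElementary E) (m : Etale E G) (h0 : E.H),
      uH (m.fH h0) = (c E m hE).fH h0 := by
    intro E hE m h0
    obtain ⟨e, hcomp, -, hfh⟩ := corolla_comp G E m (E.p h0)
    have hn := hnat (corolla G (m.fV (E.p h0))) E (corolla_elem G (m.fV (E.p h0))) hE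
      (corollaMap G (m.fV (E.p h0))) m e hcomp
    have hh : G.p (m.fH h0) = m.fV (E.p h0) := (m.comm_p h0).symm
    rw [uH_eq (m.fV (E.p h0)) (m.fH h0) hh]
    rw [hn.2.1 ⟨m.fH h0, hh⟩, hfh ⟨m.fH h0, hh⟩ h0 rfl rfl]
  refine ⟨⟨uA, uH, uV, ?_, ?_, ?_, ?_⟩, ?_, ?_⟩
  · -- comm_s
    intro h
    have h1 : uA (G.s h) =
        (c (corolla G (G.p h)) (corollaMap G (G.p h)) (corolla_elem G (G.p h))).fA
          (Sum.inl ⟨h, rfl⟩) :=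
      keyA (corolla G (G.p h)) (corolla_elem G (G.p h)) (corollaMap G (G.p h)) (Sum.inl ⟨h, rfl⟩)
    rw [h1]
    exact (c (corolla G (G.p h)) (corollaMap G (G.p h)) (corolla_elem G (G.p h))).comm_s ⟨h, rfl⟩
  · -- comm_p
    intro h
    exact (c (corolla G (G.p h)) (corollaMap G (G.p h)) (corolla_elem G (G.p h))).comm_p ⟨h, rfl⟩
  · -- comm_i
    intro a
    calc uA (G.i a) = (c I0 (unitMap G a) I0_elem).fA false := keyA I0 I0_elem (unitMap G a) false
      _ = K.i ((c I0 (unitMap G a) I0_elem).fA true) := (c I0 (unitMap G a) I0_elem).comm_i true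
      _ = K.i (uA a) := rfl
  · -- pullback
    intro h' v hp
    obtain ⟨x, ⟨-, hx2⟩, hxu⟩ :=
      (c (corolla G v) (corollaMap G v) (corolla_elem G v)).pullback h' () hp
    refine ⟨x.1, ⟨x.2, ?_⟩, ?_⟩
    · rw [uH_eq v x.1 x.2]; exact hx2
    · rintro h₁ ⟨hp1, hu1⟩
      have hx : (⟨h₁, hp1⟩ : (corolla G v).H) = x :=
        hxu ⟨h₁, hp1⟩ ⟨rfl, by rw [← uH_eq v h₁ hp1]; exact hu1⟩
      exact congrArg Subtype.val hx
  · -- cocone factorization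
    intro E m hE
    exact ⟨fun a0 => (keyA E hE m a0).symm, fun h0 => (keyH E hE m h0).symm,
      fun v0 => (keyV E hE m v0).symm⟩
  · -- uniqueness
    intro u' hu'
    refine Etale.ext' ?_ ?_ ?_
    · intro a
      exact ((hu' I0 (unitMap G a) I0_elem).1 true).symm
    · intro h
      exact ((hu' (corolla G (G.p h)) (corollaMap G (G.p h)) (corolla_elem G (G.p h))).2.1
        ⟨h, rfl⟩).symm
    · intro v
      exact ((hu' (corolla G v) (corollaMap G v) (corolla_elem G v)).2.2 ()).symm
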